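/- arXiv:2410.00369 — 3 statements merged into one kernel-verified Lean document; each statement's English description precedes it below -/
import Mathlib

section
/- Let M be a bounded open convex subset of ℝ^n (n ≥ 2), σ : ℝ^n × S^{n-1} → ℝ continuous and bounded, λ ∈ ℝ, and let φ : ℝ × ℝ^n × S^{n-1} → ℂ be any function. Define the geometric-optics leading term u(t,x,v) := φ(t − τ_-(x,v), x − τ_-(x,v)v, v) · e^{iλ(t − x·v)} · Θ_σ(x,v). Then for every t ∈ ℝ, x ∈ M and v ∈ S^{n-1}, the map s ↦ u(t+s, x+sv, v) is differentiable at s = 0 with derivative −σ(x,v)·u(t,x,v); i.e., u solves the scattering-free linear transport equation ∂_t u + v·∇u + σu = 0 along characteristics. -/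
open MeasureTheory Metric
open scoped RealInnerProductSpace

/-- Forward exit time of a set `M` from point `x` in direction `v`. -/
noncomputable def exitTime {n : ℕ} (M : Set (EuclideanSpace ℝ (Fin n)))
    (x v : EuclideanSpace ℝ (Fin n)) : ℝ :=
  sSup {s : ℝ | 0 ≤ s ∧ ∀ s' : ℝ, 0 ≤ s' → s' < s → x + s' • v ∈ M}

/-- Backward exit time: `τ₋(x,v) := τ(x,-v)`. -/
noncomputable def backExitTime {n : ℕ} (M : Set (EuclideanSpace ℝ (Fin n)))
    (x v : EuclideanSpace ℝ (Fin n)) : ℝ :=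
  exitTime M x (-v)

/-- `Θ_σ(x,v) := exp(−∫_0^{τ₋(x,v)} σ(x − (τ₋(x,v) − s)v, v) ds)`. -/
noncomputable def Theta {n : ℕ} (M : Set (EuclideanSpace ℝ (Fin n)))
    (σ : EuclideanSpace ℝ (Fin n) → EuclideanSpace ℝ (Fin n) → ℝ)
    (x v : EuclideanSpace ℝ (Fin n)) : ℝ :=
  Real.exp (-(∫ s in (0:ℝ)..(backExitTime M x v),
    σ (x - (backExitTime M x v - s) • v) v))

/-- The geometric-optics leading term
`u(t,x,v) := φ(t − τ₋(x,v), x − τ₋(x,v)v, v) · e^{iλ(t − x·v)} · Θ_σ(x,v)`. -/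
noncomputable def GOLead {n : ℕ} (M : Set (EuclideanSpace ℝ (Fin n)))
    (σ : EuclideanSpace ℝ (Fin n) → EuclideanSpace ℝ (Fin n) → ℝ) (lam : ℝ)
    (φ : ℝ → EuclideanSpace ℝ (Fin n) → EuclideanSpace ℝ (Fin n) → ℂ)
    (t : ℝ) (x v : EuclideanSpace ℝ (Fin n)) : ℂ :=
  φ (t - backExitTime M x v) (x - backExitTime M x v • v) v
    * Complex.exp (Complex.I * (lam : ℂ) * ((t - ⟪x, v⟫ : ℝ) : ℂ))
    * (Theta M σ x v : ℂ)

/-- For `M` a bounded open convex subset of `ℝⁿ` (`n ≥ 2`), `σ` continuous and bounded, `λ ∈ ℝ`,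
and any `φ : ℝ × ℝⁿ × S^{n-1} → ℂ`, the geometric-optics leading term `u` solves the
scattering-free linear transport equation `∂ₜu + v·∇u + σu = 0` along characteristics:
for every `t ∈ ℝ`, `x ∈ M` and unit `v`, the map `s ↦ u(t+s, x+sv, v)` is differentiable
at `s = 0` with derivative `−σ(x,v)·u(t,x,v)`. -/
theorem stmt_2 {n : ℕ} (hn : 2 ≤ n) (M : Set (EuclideanSpace ℝ (Fin n)))
    (hMb : Bornology.IsBounded M) (hMo : IsOpen M) (hMc : Convex ℝ M)
    (σ : EuclideanSpace ℝ (Fin n) → EuclideanSpace ℝ (Fin n) → ℝ)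
    (hσc : Continuous fun p : EuclideanSpace ℝ (Fin n) × EuclideanSpace ℝ (Fin n) => σ p.1 p.2)
    (hσb : ∃ C : ℝ, ∀ x v, |σ x v| ≤ C)
    (lam : ℝ) (φ : ℝ → EuclideanSpace ℝ (Fin n) → EuclideanSpace ℝ (Fin n) → ℂ)
    (t : ℝ) (x : EuclideanSpace ℝ (Fin n)) (hx : x ∈ M)
    (v : EuclideanSpace ℝ (Fin n)) (hv : ‖v‖ = 1) :
    HasDerivAt (fun s : ℝ => GOLead M σ lam φ (t + s) (x + s • v) v)
      (-(σ x v : ℂ) * GOLead M σ lam φ t x v) 0 := by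
  classical
  set B : Set ℝ := {r : ℝ | x + r • (-v) ∈ M} with hBdef
  have h0B : (0 : ℝ) ∈ B := by simpa [hBdef] using hx
  have hBconv : Convex ℝ B := by
    intro a ha b hb p q hp hq hpq
    have key : p • (x + a • (-v)) + q • (x + b • (-v))
        = (p + q) • x + (p • a + q • b) • (-v) := by
      simp only [smul_eq_mul]; module
    rw [hpq, one_smul] at key
    show x + (p • a + q • b) • (-v) ∈ M
    rw [← key]
    exact hMc ha hb hp hq hpq
  have hBopen : IsOpen B :=
    hMo.preimage (continuous_const.add (continuous_id.smul continuous_const))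
  have hBbdd : BddAbove B := by
    obtain ⟨R, hR⟩ := hMb.subset_closedBall 0
    refine ⟨R + ‖x‖, fun r hr => ?_⟩
    have h1 : ‖x + r • (-v)‖ ≤ R := by simpa [dist_eq_norm] using hR hr
    have h2 : ‖r • (-v)‖ = |r| := by
      rw [norm_smul, norm_neg, hv, Real.norm_eq_abs, mul_one]
    have : |r| ≤ R + ‖x‖ := by
      calc |r| = ‖(x + r • (-v)) - x‖ := by rw [add_sub_cancel_left, h2]
      _ ≤ ‖x + r • (-v)‖ + ‖x‖ := norm_sub_le _ _
      _ ≤ R + ‖x‖ := by linarith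
    exact le_trans (le_abs_self r) this
  set T : ℝ := sSup B with hTdef
  have hBne : B.Nonempty := ⟨0, h0B⟩
  have hTnotB : T ∉ B := by
    intro hT
    obtain ⟨ε, hε, hball⟩ := Metric.isOpen_iff.1 hBopen T hT
    have : T + ε / 2 ∈ B := hball (by
      simp only [mem_ball, Real.dist_eq, add_sub_cancel_left]
      rw [abs_of_pos (half_pos hε)]
      linarith)
    have := le_csSup hBbdd this
    linarith
  have hIoo : ∀ a ∈ B, ∀ r : ℝ, a ≤ r → r < T → r ∈ B := by
    intro a ha r har hrT
    obtain ⟨b, hbB, hrb⟩ := exists_lt_of_lt_csSup hBne hrT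
    exact hBconv.ordConnected.out ha hbB ⟨har, hrb.le⟩
  have hT0 : 0 < T :=
    lt_of_le_of_ne (le_csSup hBbdd h0B) (fun h => hTnotB (h ▸ h0B))
  -- the shift lemma
  have key : ∀ s : ℝ, -s ∈ B → backExitTime M (x + s • v) v = T + s := by
    intro s hs
    have hsT : -s < T := lt_of_le_of_ne (le_csSup hBbdd hs) (fun h => hTnotB (h ▸ hs))
    have hmem : ∀ s' : ℝ, (x + s • v) + s' • (-v) ∈ M ↔ (s' - s) ∈ B := by
      intro s'
      have h : (x + s • v) + s' • (-v) = x + (s' - s) • (-v) := by module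
      rw [hBdef]; rw [Set.mem_setOf_eq, h]
    have hub : ∀ r ∈ {r : ℝ | 0 ≤ r ∧ ∀ s' : ℝ, 0 ≤ s' → s' < r →
        (x + s • v) + s' • (-v) ∈ M}, r ≤ T + s := by
      rintro r ⟨hr0, hrP⟩
      by_contra hcon
      push_neg at hcon
      have h0Ts : 0 < T + s := by linarith
      set s' : ℝ := (T + s + r) / 2 with hs'
      have h1 : 0 ≤ s' := by positivity
      have h2 : s' < r := by rw [hs']; linarith
      have h3 := (hmem s').1 (hrP s' h1 h2)
      have h4 : s' - s ≤ T := le_csSup hBbdd h3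
      rw [hs'] at h4; linarith
    have hmemT : T + s ∈ {r : ℝ | 0 ≤ r ∧ ∀ s' : ℝ, 0 ≤ s' → s' < r →
        (x + s • v) + s' • (-v) ∈ M} := by
      refine ⟨by linarith, fun s' hs'0 hs'T => ?_⟩
      exact (hmem s').2 (hIoo (-s) hs (s' - s) (by linarith) (by linarith))
    rw [backExitTime, exitTime]
    exact le_antisymm (csSup_le ⟨T + s, hmemT⟩ hub) (le_csSup ⟨T + s, hub⟩ hmemT)
  have hτx : backExitTime M x v = T := by
    have := key 0 (by simpa using h0B)
    simpa using this
  -- eventual identification of the backward exit time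
  have hev : ∀ᶠ s in nhds (0 : ℝ), -s ∈ B := by
    have : B ∈ nhds (-(0:ℝ)) := hBopen.mem_nhds (by simpa using h0B)
    exact continuous_neg.continuousAt.preimage_mem_nhds this
  -- the 1-d integrand along the characteristic
  set g : ℝ → ℝ := fun r => σ (x - (T - r) • v) v with hgdef
  have hg : Continuous g := by
    show Continuous fun r : ℝ =>
      (fun p : EuclideanSpace ℝ (Fin n) × EuclideanSpace ℝ (Fin n) => σ p.1 p.2)
        (x - (T - r) • v, v)
    exact hσc.comp ((continuous_const.sub ((continuous_const.sub continuous_id).smul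
      continuous_const)).prodMk continuous_const)
  set F : ℝ → ℝ := fun y => ∫ r in (0:ℝ)..y, g r with hFdef
  have hF : HasDerivAt F (g T) T :=
    intervalIntegral.integral_hasDerivAt_right (hg.intervalIntegrable 0 T)
      (hg.stronglyMeasurableAtFilter _ _) hg.continuousAt
  have h1 : HasDerivAt (fun s : ℝ => T + s) 1 0 := (hasDerivAt_id 0).const_add T
  have hcomp : HasDerivAt (fun s : ℝ => F (T + s)) (g T) 0 := by
    have h2 : HasDerivAt F (g T) (T + 0) := by simpa using hF
    simpa [Function.comp_def] using h2.comp 0 h1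
  have hexp : HasDerivAt (fun s : ℝ => Real.exp (-(F (T + s))))
      (Real.exp (-(F T)) * (-(g T))) 0 := by
    have := hcomp.neg.exp
    simpa using this
  set C : ℂ := φ (t - T) (x - T • v) v
    * Complex.exp (Complex.I * (lam : ℂ) * ((t - ⟪x, v⟫ : ℝ) : ℂ)) with hCdef
  have hD : HasDerivAt (fun s : ℝ => C * ((Real.exp (-(F (T + s)))) : ℂ))
      (C * ((Real.exp (-(F T)) * (-(g T)) : ℝ) : ℂ)) 0 :=
    (hexp.ofReal_comp).const_mul C
  have heq : (fun s : ℝ => GOLead M σ lam φ (t + s) (x + s • v) v)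
      =ᶠ[nhds (0:ℝ)] (fun s : ℝ => C * ((Real.exp (-(F (T + s)))) : ℂ)) := by
    filter_upwards [hev] with s hs
    have hτ : backExitTime M (x + s • v) v = T + s := key s hs
    have hφarg1 : (t + s) - (T + s) = t - T := by ring
    have hφarg2 : (x + s • v) - (T + s) • v = x - T • v := by module
    have hinner : ⟪x + s • v, v⟫ = ⟪x, v⟫ + s := by
      rw [inner_add_left, real_inner_smul_left, real_inner_self_eq_norm_sq, hv]
      ring
    have hThe : Theta M σ (x + s • v) v = Real.exp (-(F (T + s))) := by
      rw [Theta, hτ, hFdef]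
      congr 2
      apply intervalIntegral.integral_congr
      intro r _
      show σ ((x + s • v) - ((T + s) - r) • v) v = σ (x - (T - r) • v) v
      have h : (x + s • v) - ((T + s) - r) • v = x - (T - r) • v := by module
      rw [h]
    rw [GOLead, hτ, hφarg1, hφarg2, hThe, hCdef]
    have harg : ((t + s - ⟪x + s • v, v⟫ : ℝ) : ℂ) = ((t - ⟪x, v⟫ : ℝ) : ℂ) := by
      rw [hinner]; push_cast; ring
    rw [harg]
  have hval : C * ((Real.exp (-(F T)) * (-(g T)) : ℝ) : ℂ)
      = -(σ x v : ℂ) * GOLead M σ lam φ t x v := by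
    have hgT : g T = σ x v := by simp [hgdef]
    have hThx : Theta M σ x v = Real.exp (-(F T)) := by
      rw [Theta, hτx, hFdef]
    rw [GOLead, hτx, hThx, hgT, hCdef]
    push_cast
    ring
  exact (hD.congr_of_eventuallyEq heq).congr_deriv hval
end

section
/- Let n ≥ 2 and fix x ∈ ℝ^n with x ≠ 0. For every Φ ∈ L²(S^{n-1}; ℂ), the oscillatory integral ∫_{S^{n-1}} e^{−iλ x·v} Φ(v) dσ(v) tends to 0 as λ → +∞ and as λ → −∞; i.e., the family v ↦ e^{−iλ x·v} converges weakly to 0 in L²(S^{n-1}). -/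
open MeasureTheory Metric Filter
open scoped RealInnerProductSpace

/-- The standard surface measure on the unit sphere `S^{n-1} ⊆ ℝⁿ`. -/
noncomputable def sphereMeasure (n : ℕ) :
    Measure (sphere (0 : EuclideanSpace ℝ (Fin n)) 1) :=
  (volume : Measure (EuclideanSpace ℝ (Fin n))).toSphere

open Set Complex
open scoped Real Pointwise

set_option maxHeartbeats 1000000

noncomputable def psi (a : ℝ) : ℝ → ℝ := fun t => a * t / Real.sqrt (1 - t ^ 2)

lemma psi_image_null (a : ℝ) {N : Set ℝ} (hN : MeasurableSet N)
    (hN1 : N ⊆ Ioo (-1 : ℝ) 1) (h0 : volume N = 0) : volume (psi a '' N) = 0 := by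
  have hdiff : ∀ t ∈ N, DifferentiableAt ℝ (psi a) t := by
    intro t ht
    obtain ⟨h1, h2⟩ := hN1 ht
    have hpos : 0 < 1 - t ^ 2 := by nlinarith
    have hs : DifferentiableAt ℝ (fun t : ℝ => Real.sqrt (1 - t ^ 2)) t := by
      have h1 : DifferentiableAt ℝ (fun t : ℝ => 1 - t ^ 2) t := by fun_prop
      exact ((Real.hasDerivAt_sqrt (ne_of_gt hpos)).comp t h1.hasDerivAt).differentiableAt
    have hne : Real.sqrt (1 - t ^ 2) ≠ 0 := by positivity
    exact ((differentiableAt_const a).mul differentiableAt_id).div hs hne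
  refine le_antisymm ?_ zero_le
  calc volume (psi a '' N) ≤ ∫⁻ t in N, ENNReal.ofReal |(fderiv ℝ (psi a) t).det| := by
        apply addHaar_image_le_lintegral_abs_det_fderiv volume hN
        intro t ht
        exact ((hdiff t ht).hasFDerivAt).hasFDerivWithinAt
    _ = 0 := setLIntegral_measure_zero _ _ h0

lemma slice_subset (a : ℝ) (ha : 0 < a) (s : Set ℝ) :
    {u : ℝ | u / Real.sqrt (u ^ 2 + a ^ 2) ∈ s} ⊆ psi a '' (s ∩ Ioo (-1 : ℝ) 1) := by
  intro u hu
  set b := Real.sqrt (u ^ 2 + a ^ 2) with hb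
  have hbpos : 0 < b := Real.sqrt_pos.2 (by positivity)
  have hb2 : b ^ 2 = u ^ 2 + a ^ 2 := Real.sq_sqrt (by positivity)
  set v := u / b with hv
  have habs : |u| < b := by
    rw [← Real.sqrt_sq_eq_abs, hb]
    exact Real.sqrt_lt_sqrt (by positivity) (by nlinarith)
  have hvmem : v ∈ Ioo (-1 : ℝ) 1 := by
    constructor
    · rw [hv, lt_div_iff₀ hbpos]; have := neg_abs_le u; nlinarith [abs_nonneg u]
    · rw [hv, div_lt_one hbpos]; have := le_abs_self u; nlinarith
  refine ⟨v, ⟨hu, hvmem⟩, ?_⟩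
  have h1v : 1 - v ^ 2 = a ^ 2 / b ^ 2 := by
    rw [hv]; field_simp; nlinarith
  have hsq : Real.sqrt (1 - v ^ 2) = a / b := by
    rw [h1v, Real.sqrt_div (by positivity), Real.sqrt_sq ha.le, Real.sqrt_sq hbpos.le]
  rw [psi]; rw [hsq, hv]; field_simp

lemma pi_null {m : ℕ} (hm : 0 < m) {s : Set ℝ} (hs : MeasurableSet s)
    (h0 : volume s = 0) :
    volume {y : Fin (m + 1) → ℝ | (∑ i, (y i) ^ 2) ≠ 0 ∧
      y 0 / Real.sqrt (∑ i, (y i) ^ 2) ∈ s} = 0 := by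
  set e := MeasurableEquiv.piFinSuccAbove (fun _ : Fin (m + 1) => ℝ) 0 with he
  have hmp := MeasureTheory.volume_preserving_piFinSuccAbove (fun _ : Fin (m + 1) => ℝ) 0
  set T : Set (ℝ × (Fin m → ℝ)) := {p | (p.1 ^ 2 + ∑ i, (p.2 i) ^ 2) ≠ 0 ∧
      p.1 / Real.sqrt (p.1 ^ 2 + ∑ i, (p.2 i) ^ 2) ∈ s} with hT
  have hq : Measurable fun p : ℝ × (Fin m → ℝ) => p.1 ^ 2 + ∑ i, (p.2 i) ^ 2 := by fun_prop
  have hTmeas : MeasurableSet T := by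
    apply MeasurableSet.inter
    · exact (hq (measurableSet_singleton 0)).compl
    · exact (measurable_fst.div (Measurable.comp Real.continuous_sqrt.measurable hq)) hs
  have hset : {y : Fin (m + 1) → ℝ | (∑ i, (y i) ^ 2) ≠ 0 ∧
      y 0 / Real.sqrt (∑ i, (y i) ^ 2) ∈ s} = e ⁻¹' T := by
    ext y
    have hsum : ∑ i, (y i) ^ 2 = (e y).1 ^ 2 + ∑ i, ((e y).2 i) ^ 2 := by
      rw [Fin.sum_univ_succAbove (fun i => (y i) ^ 2) 0]
      rfl
    simp only [mem_setOf_eq, mem_preimage, hT, hsum]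
    rfl
  rw [hset, hmp.measure_preimage hTmeas.nullMeasurableSet]
  rw [show (volume : Measure (ℝ × (Fin m → ℝ))) = (volume : Measure ℝ).prod volume from rfl, Measure.prod_apply_symm hTmeas]
  have hae : ∀ᵐ z : Fin m → ℝ, z ≠ 0 := by
    rw [MeasureTheory.ae_iff]
    simp only [not_ne_iff]
    have : {z : Fin m → ℝ | z = 0} = Set.pi univ (fun _ => ({0} : Set ℝ)) := by
      ext z; simp [funext_iff, Set.mem_pi]
    rw [this, volume_pi_pi]
    exact Finset.prod_eq_zero (Finset.mem_univ ⟨0, hm⟩) Real.volume_singleton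
  rw [show (0 : ENNReal) = ∫⁻ _ : Fin m → ℝ, 0 from (lintegral_zero).symm]
  apply lintegral_congr_ae
  filter_upwards [hae] with z hz
  have hzpos : 0 < ∑ i, (z i) ^ 2 := by
    rcases Function.ne_iff.1 hz with ⟨i, hi⟩
    have hi' : z i ≠ 0 := hi
    have : 0 < (z i) ^ 2 := by positivity
    exact Finset.sum_pos' (fun j _ => sq_nonneg _) ⟨i, Finset.mem_univ i, this⟩
  set a := Real.sqrt (∑ i, (z i) ^ 2) with ha
  have hapos : 0 < a := Real.sqrt_pos.2 hzpos
  have ha2 : a ^ 2 = ∑ i, (z i) ^ 2 := Real.sq_sqrt hzpos.le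
  refine measure_mono_null ?_ (psi_image_null a
    (hs.inter measurableSet_Ioo) (inter_subset_right) (measure_mono_null inter_subset_left h0))
  intro u hu
  simp only [mem_preimage, mem_setOf_eq, hT] at hu
  apply slice_subset a hapos s
  simpa only [mem_setOf_eq, ha2] using hu.2

lemma euclid_null_e0 {m : ℕ} (hm : 0 < m) {s : Set ℝ} (hs : MeasurableSet s)
    (h0 : volume s = 0) :
    volume {y : EuclideanSpace ℝ (Fin (m + 1)) | y ≠ 0 ∧ y 0 / ‖y‖ ∈ s} = 0 := by
  have hmp := EuclideanSpace.volume_preserving_symm_measurableEquiv_toLp (Fin (m + 1))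
  set T : Set (Fin (m + 1) → ℝ) := {y | (∑ i, (y i) ^ 2) ≠ 0 ∧
      y 0 / Real.sqrt (∑ i, (y i) ^ 2) ∈ s} with hT
  have hTmeas : MeasurableSet T := by
    have hq : Measurable fun y : Fin (m + 1) → ℝ => ∑ i, (y i) ^ 2 := by fun_prop
    exact ((hq (measurableSet_singleton 0)).compl).inter
      (((measurable_pi_apply 0).div (Real.continuous_sqrt.measurable.comp hq)) hs)
  have hset : {y : EuclideanSpace ℝ (Fin (m + 1)) | y ≠ 0 ∧ y 0 / ‖y‖ ∈ s} =
      (MeasurableEquiv.toLp 2 (Fin (m + 1) → ℝ)).symm ⁻¹' T := by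
    ext y
    have hnorm : ‖y‖ = Real.sqrt (∑ i, (y i) ^ 2) := by
      rw [EuclideanSpace.norm_eq]
      congr 1
      exact Finset.sum_congr rfl fun i _ => by rw [Real.norm_eq_abs, _root_.sq_abs]
    have hzero : y ≠ 0 ↔ (∑ i, (y i) ^ 2) ≠ 0 := by
      rw [not_iff_not]
      constructor
      · rintro rfl; simp
      · intro h
        have := (Finset.sum_eq_zero_iff_of_nonneg (fun i _ => sq_nonneg (y i))).1 h
        ext i
        simpa [pow_eq_zero_iff] using this i (Finset.mem_univ i)
    simp only [mem_setOf_eq, mem_preimage, hT, hnorm, hzero]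
    rfl
  rw [hset, hmp.measure_preimage hTmeas.nullMeasurableSet]
  exact pi_null hm hs h0

lemma euclid_null {n : ℕ} (hn : 2 ≤ n) (x : EuclideanSpace ℝ (Fin n)) (hx : x ≠ 0)
    {s : Set ℝ} (hs : MeasurableSet s) (h0 : volume s = 0) :
    volume {y : EuclideanSpace ℝ (Fin n) | y ≠ 0 ∧ ⟪x, y⟫ / ‖y‖ ∈ s} = 0 := by
  obtain ⟨m, rfl⟩ : ∃ m, n = m + 1 := ⟨n - 1, by omega⟩
  have hm : 0 < m := by omega
  set c : ℝ := ‖x‖ with hc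
  have hcpos : 0 < c := norm_pos_iff.2 hx
  set u : EuclideanSpace ℝ (Fin (m + 1)) := c⁻¹ • x with hu
  have hnu : ‖u‖ = 1 := by
    rw [hu, norm_smul, norm_inv, Real.norm_eq_abs, abs_of_pos hcpos, ← hc,
      inv_mul_cancel₀ hcpos.ne']
  set w : EuclideanSpace ℝ (Fin (m + 1)) := EuclideanSpace.single 0 (1 : ℝ) with hw
  have hnw : ‖w‖ = 1 := by rw [hw, EuclideanSpace.norm_single, norm_one]
  set e := Submodule.reflection (ℝ ∙ (u - w))ᗮ with hKe
  have heu : e u = w := Submodule.reflection_sub (hnu.trans hnw.symm)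
  have hmp : MeasurePreserving e := e.measurePreserving
  set s₂ : Set ℝ := (fun r => c * r) ⁻¹' s with hs₂
  have hs₂meas : MeasurableSet s₂ := (measurable_const_mul c) hs
  have hs₂null : volume s₂ = 0 := by
    have hmap := Real.map_volume_mul_left (a := c) hcpos.ne'
    have h2 : volume s₂ = (Measure.map (fun r => c * r) volume) s := by
      rw [Measure.map_apply (measurable_const_mul c) hs]
    rw [h2, hmap]
    simp [h0]
  have hSmeas : MeasurableSet {y : EuclideanSpace ℝ (Fin (m + 1)) | y ≠ 0 ∧ ⟪x, y⟫ / ‖y‖ ∈ s} := by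
    apply MeasurableSet.inter
    · exact (measurableSet_singleton 0).compl
    · have h1 : Measurable fun y : EuclideanSpace ℝ (Fin (m + 1)) => ⟪x, y⟫ :=
        (continuous_const.inner continuous_id).measurable
      exact (h1.div continuous_norm.measurable) hs
  have hpre : e ⁻¹' {y : EuclideanSpace ℝ (Fin (m + 1)) | y ≠ 0 ∧ ⟪x, y⟫ / ‖y‖ ∈ s} =
      {y : EuclideanSpace ℝ (Fin (m + 1)) | y ≠ 0 ∧ y 0 / ‖y‖ ∈ s₂} := by
    ext y
    have h1 : ⟪x, e y⟫ = c * (y 0) := by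
      calc ⟪x, e y⟫ = ⟪e.symm x, y⟫ := by
            rw [← e.inner_map_map (e.symm x) y, e.apply_symm_apply]
          _ = c * (y 0) := by
            rw [hKe, Submodule.reflection_symm, ← hKe]
            have hex : e x = c • w := by
              have hxcu : x = c • u := by
                rw [hu, smul_smul, mul_inv_cancel₀ hcpos.ne', one_smul]
              rw [hxcu, _root_.map_smul, heu]
            rw [hex, real_inner_smul_left, hw, EuclideanSpace.inner_single_left]
            simp
    have h2 : ‖e y‖ = ‖y‖ := e.norm_map y
    have h3 : e y ≠ 0 ↔ y ≠ 0 := not_congr e.map_eq_zero_iff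
    simp only [mem_preimage, mem_setOf_eq, h1, h2, h3, hs₂]
    rw [mul_div_assoc]
  rw [← hmp.measure_preimage hSmeas.nullMeasurableSet, hpre]
  exact euclid_null_e0 hm hs₂meas hs₂null

lemma sphere_null {n : ℕ} (hn : 2 ≤ n) (x : EuclideanSpace ℝ (Fin n)) (hx : x ≠ 0)
    {s : Set ℝ} (hs : MeasurableSet s) (h0 : volume s = 0) :
    sphereMeasure n {v | ⟪x, (v : EuclideanSpace ℝ (Fin n))⟫ ∈ s} = 0 := by
  set A : Set (sphere (0 : EuclideanSpace ℝ (Fin n)) 1) :=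
    {v | ⟪x, (v : EuclideanSpace ℝ (Fin n))⟫ ∈ s} with hA
  have hAmeas : MeasurableSet A :=
    ((continuous_const.inner continuous_subtype_val).measurable) hs
  rw [sphereMeasure, Measure.toSphere_apply' _ hAmeas]
  have hsub : (Ioo (0 : ℝ) 1 • ((↑) '' A) : Set (EuclideanSpace ℝ (Fin n))) ⊆
      {y : EuclideanSpace ℝ (Fin n) | y ≠ 0 ∧ ⟪x, y⟫ / ‖y‖ ∈ s} := by
    rintro y hy
    rw [Set.mem_smul] at hy
    obtain ⟨r, hr, z, hz, rfl⟩ := hy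
    obtain ⟨v, hvA, rfl⟩ := hz
    have hvnorm : ‖(v : EuclideanSpace ℝ (Fin n))‖ = 1 := by
      simpa using mem_sphere_zero_iff_norm.1 v.2
    have hrpos : 0 < r := hr.1
    constructor
    · intro h
      rw [smul_eq_zero] at h
      rcases h with h | h
      · exact hrpos.ne' h
      · rw [h] at hvnorm; simp at hvnorm
    · have hnorm : ‖r • (v : EuclideanSpace ℝ (Fin n))‖ = r := by
        rw [norm_smul, hvnorm, Real.norm_eq_abs, abs_of_pos hrpos, mul_one]
      show ⟪x, r • (v : EuclideanSpace ℝ (Fin n))⟫ / ‖r • (v : EuclideanSpace ℝ (Fin n))‖ ∈ s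
      rw [hnorm, real_inner_smul_right, mul_comm, mul_div_assoc, div_self hrpos.ne', mul_one]
      exact hvA
  rw [measure_mono_null hsub (euclid_null hn x hx hs h0)]
  simp

lemma sphere_map_ac {n : ℕ} (hn : 2 ≤ n) (x : EuclideanSpace ℝ (Fin n)) (hx : x ≠ 0) :
    ((sphereMeasure n).map
        (fun v : sphere (0 : EuclideanSpace ℝ (Fin n)) 1 =>
          (⟪x, (v : EuclideanSpace ℝ (Fin n))⟫ : ℝ))) ≪ volume := by
  have hg : Measurable fun v : sphere (0 : EuclideanSpace ℝ (Fin n)) 1 =>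
      (⟪x, (v : EuclideanSpace ℝ (Fin n))⟫ : ℝ) :=
    (continuous_const.inner continuous_subtype_val).measurable
  refine Measure.AbsolutelyContinuous.mk fun s hs h0 => ?_
  rw [Measure.map_apply hg hs]
  exact sphere_null hn x hx hs h0

instance sphereMeasure_finite (n : ℕ) : IsFiniteMeasure (sphereMeasure n) :=
  inferInstanceAs (IsFiniteMeasure (volume : Measure (EuclideanSpace ℝ (Fin n))).toSphere)

-- Riemann-Lebesgue specialization: for integrable H : ℝ → ℝ,
lemma RL (H : ℝ → ℝ) :
    Tendsto (fun lam : ℝ => ∫ t : ℝ, Complex.exp (-(Complex.I * (lam : ℂ) * (t : ℂ))) * (H t : ℂ))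
      atTop (nhds 0) := by
  have h0 := Real.tendsto_integral_exp_smul_cocompact (fun t : ℝ => (H t : ℂ))
  have hcomp : Tendsto (fun lam : ℝ => lam / (2 * π)) atTop (cocompact ℝ) := by
    have h1 : Tendsto (fun lam : ℝ => lam / (2 * π)) atTop atTop :=
      tendsto_id.atTop_div_const (by positivity)
    exact h1.mono_right (by exact atTop_le_cocompact)
  have := h0.comp hcomp
  simp only [Function.comp_def] at this
  convert this using 2 with lam
  refine integral_congr_ae (Filter.Eventually.of_forall fun t => ?_)
  beta_reduce
  rw [Circle.smul_def, Real.fourierChar_apply]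
  have harg : 2 * π * -(t * (lam / (2 * π))) = -(lam * t) := by
    field_simp
  rw [harg]
  have hexp : ((-(lam * t) : ℝ) : ℂ) * Complex.I = -(Complex.I * (lam : ℂ) * (t : ℂ)) := by
    push_cast
    ring
  rw [hexp, smul_eq_mul]

lemma key_nonneg {n : ℕ} (hn : 2 ≤ n) (x : EuclideanSpace ℝ (Fin n)) (hx : x ≠ 0)
    (f : sphere (0 : EuclideanSpace ℝ (Fin n)) 1 → ℝ) (hf : Measurable f)
    (hf0 : ∀ v, 0 ≤ f v) (hfi : Integrable f (sphereMeasure n)) :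
    Tendsto (fun lam : ℝ => ∫ v, Complex.exp (-(Complex.I * (lam : ℂ) *
        ((⟪x, (v : EuclideanSpace ℝ (Fin n))⟫ : ℝ) : ℂ))) * (f v : ℂ) ∂(sphereMeasure n))
      atTop (nhds 0) := by
  set σ := sphereMeasure n
  set g : sphere (0 : EuclideanSpace ℝ (Fin n)) 1 → ℝ :=
    fun v => (⟪x, (v : EuclideanSpace ℝ (Fin n))⟫ : ℝ) with hgdef
  have hg : Measurable g := (continuous_const.inner continuous_subtype_val).measurable
  have hgcont : Continuous g := continuous_const.inner continuous_subtype_val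
  set μf := σ.withDensity (fun v => ((f v).toNNReal : ENNReal)) with hμf
  have hfintop : ∫⁻ v, ((f v).toNNReal : ENNReal) ∂σ ≠ ⊤ := by
    have : ∀ v, ((f v).toNNReal : ENNReal) = ‖f v‖₊ := by
      intro v
      rw [Real.toNNReal_eq_nnnorm_of_nonneg (hf0 v)]
    rw [lintegral_congr fun v => this v]
    exact hfi.2.ne
  haveI : IsFiniteMeasure μf := isFiniteMeasure_withDensity hfintop
  haveI : IsFiniteMeasure (μf.map g) := ⟨by
    rw [Measure.map_apply hg MeasurableSet.univ, Set.preimage_univ]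
    exact measure_lt_top _ _⟩
  have hac : μf.map g ≪ volume :=
    ((withDensity_absolutelyContinuous σ _).map hg).trans (sphere_map_ac hn x hx)
  set h := (μf.map g).rnDeriv volume with hh
  have hhmeas : Measurable h := Measure.measurable_rnDeriv _ _
  have hwd : volume.withDensity h = μf.map g := Measure.withDensity_rnDeriv_eq _ _ hac
  set H : ℝ → ℝ := fun t => (h t).toReal with hH
  have hchain : ∀ lam : ℝ,
      (∫ v, Complex.exp (-(Complex.I * (lam : ℂ) * ((g v : ℝ) : ℂ))) * (f v : ℂ) ∂σ)
      = ∫ t : ℝ, Complex.exp (-(Complex.I * (lam : ℂ) * (t : ℂ))) * (H t : ℂ) := by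
    intro lam
    set e : ℝ → ℂ := fun t => Complex.exp (-(Complex.I * (lam : ℂ) * (t : ℂ))) with he
    have hecont : Continuous e := by fun_prop
    have step1 : (∫ v, e (g v) * (f v : ℂ) ∂σ) = ∫ v, e (g v) ∂μf := by
      rw [hμf, integral_withDensity_eq_integral_smul (hf.real_toNNReal)]
      refine integral_congr_ae (Filter.Eventually.of_forall fun v => ?_)
      beta_reduce
      rw [NNReal.smul_def, Real.coe_toNNReal _ (hf0 v), real_smul, mul_comm]
    have step2 : (∫ v, e (g v) ∂μf) = ∫ t, e t ∂(μf.map g) :=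
      (integral_map hg.aemeasurable hecont.aestronglyMeasurable).symm
    have step3 : (∫ t, e t ∂(μf.map g)) = ∫ t, e t ∂(volume.withDensity h) := by rw [hwd]
    have hfin : ∀ᵐ t : ℝ, h t < ⊤ := Measure.rnDeriv_lt_top _ _
    have step4 : volume.withDensity h
        = volume.withDensity (fun t => ((h t).toNNReal : ENNReal)) := by
      apply withDensity_congr_ae
      filter_upwards [hfin] with t ht
      rw [ENNReal.coe_toNNReal ht.ne]
    have step5 : (∫ t, e t ∂(volume.withDensity (fun t => ((h t).toNNReal : ENNReal))))
        = ∫ t, e t * (H t : ℂ) := by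
      rw [integral_withDensity_eq_integral_smul (hhmeas.ennreal_toNNReal)]
      refine integral_congr_ae (Filter.Eventually.of_forall fun t => ?_)
      beta_reduce
      rw [NNReal.smul_def, real_smul, mul_comm]
      norm_cast
    rw [step1, step2, step3, step4, step5]
  rw [show (fun lam : ℝ => ∫ v, Complex.exp (-(Complex.I * (lam : ℂ) *
        ((⟪x, (v : EuclideanSpace ℝ (Fin n))⟫ : ℝ) : ℂ))) * (f v : ℂ) ∂σ)
      = fun lam : ℝ => ∫ t : ℝ, Complex.exp (-(Complex.I * (lam : ℂ) * (t : ℂ))) * (H t : ℂ)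
    from funext hchain]
  exact RL H

lemma key_top {n : ℕ} (hn : 2 ≤ n) (x : EuclideanSpace ℝ (Fin n)) (hx : x ≠ 0)
    (Φ : sphere (0 : EuclideanSpace ℝ (Fin n)) 1 → ℂ)
    (hΦ : MemLp Φ 2 (sphereMeasure n)) :
    Tendsto (fun lam : ℝ => ∫ v, Complex.exp (-(Complex.I * (lam : ℂ) *
        ((⟪x, (v : EuclideanSpace ℝ (Fin n))⟫ : ℝ) : ℂ))) * Φ v ∂(sphereMeasure n))
      atTop (nhds 0) := by
  set σ := sphereMeasure n
  have hΦ1 : Integrable Φ σ :=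
    memLp_one_iff_integrable.mp (hΦ.mono_exponent one_le_two)
  set Φ' : sphere (0 : EuclideanSpace ℝ (Fin n)) 1 → ℂ := hΦ1.1.mk Φ with hΦ'def
  have hmeas' : StronglyMeasurable Φ' := hΦ1.1.stronglyMeasurable_mk
  have haeeq : Φ =ᵐ[σ] Φ' := hΦ1.1.ae_eq_mk
  have hΦ1' : Integrable Φ' σ := hΦ1.congr haeeq
  have hΦm : Measurable Φ' := hmeas'.measurable
  set e : ℝ → sphere (0 : EuclideanSpace ℝ (Fin n)) 1 → ℂ := fun lam v =>
    Complex.exp (-(Complex.I * (lam : ℂ) *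
      ((⟪x, (v : EuclideanSpace ℝ (Fin n))⟫ : ℝ) : ℂ))) with he
  have hinner : Continuous fun v : sphere (0 : EuclideanSpace ℝ (Fin n)) 1 =>
      (⟪x, (v : EuclideanSpace ℝ (Fin n))⟫ : ℝ) :=
    continuous_const.inner continuous_subtype_val
  have hecont : ∀ lam, Continuous (e lam) := fun lam =>
    Complex.continuous_exp.comp
      ((continuous_const.mul (Complex.continuous_ofReal.comp hinner)).neg)
  have hebdd : ∀ lam v, ‖e lam v‖ = 1 := by
    intro lam v
    rw [he]
    rw [Complex.norm_exp]
    norm_num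
  set f1 : sphere (0 : EuclideanSpace ℝ (Fin n)) 1 → ℝ := fun v => max (Φ' v).re 0 with hf1
  set f2 : sphere (0 : EuclideanSpace ℝ (Fin n)) 1 → ℝ := fun v => max (-(Φ' v).re) 0 with hf2
  set f3 : sphere (0 : EuclideanSpace ℝ (Fin n)) 1 → ℝ := fun v => max (Φ' v).im 0 with hf3
  set f4 : sphere (0 : EuclideanSpace ℝ (Fin n)) 1 → ℝ := fun v => max (-(Φ' v).im) 0 with hf4
  have hre : Integrable (fun v => (Φ' v).re) σ := hΦ1'.re
  have him : Integrable (fun v => (Φ' v).im) σ := hΦ1'.im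
  have h1i : Integrable f1 σ := hre.pos_part
  have h2i : Integrable f2 σ := hre.neg_part
  have h3i : Integrable f3 σ := him.pos_part
  have h4i : Integrable f4 σ := him.neg_part
  have h1m : Measurable f1 := (Complex.measurable_re.comp hΦm).max measurable_const
  have h2m : Measurable f2 := (Complex.measurable_re.comp hΦm).neg.max measurable_const
  have h3m : Measurable f3 := (Complex.measurable_im.comp hΦm).max measurable_const
  have h4m : Measurable f4 := (Complex.measurable_im.comp hΦm).neg.max measurable_const
  have T1 := key_nonneg hn x hx f1 h1m (fun v => le_max_right _ _) h1i
  have T2 := key_nonneg hn x hx f2 h2m (fun v => le_max_right _ _) h2i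
  have T3 := key_nonneg hn x hx f3 h3m (fun v => le_max_right _ _) h3i
  have T4 := key_nonneg hn x hx f4 h4m (fun v => le_max_right _ _) h4i
  have hint : ∀ (lam : ℝ) (f : sphere (0 : EuclideanSpace ℝ (Fin n)) 1 → ℝ),
      Integrable f σ → Integrable (fun v => e lam v * (f v : ℂ)) σ := by
    intro lam f hfi
    exact (hfi.ofReal).bdd_mul (hecont lam).aestronglyMeasurable
      (Filter.Eventually.of_forall fun v => le_of_eq (hebdd lam v))
  have hdecomp : ∀ lam : ℝ,
      (∫ v, e lam v * Φ v ∂σ) =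
        ((∫ v, e lam v * (f1 v : ℂ) ∂σ) - ∫ v, e lam v * (f2 v : ℂ) ∂σ) +
        Complex.I * ((∫ v, e lam v * (f3 v : ℂ) ∂σ) - ∫ v, e lam v * (f4 v : ℂ) ∂σ) := by
    intro lam
    have step0 : (∫ v, e lam v * Φ v ∂σ) = ∫ v, e lam v * Φ' v ∂σ :=
      integral_congr_ae (haeeq.mono fun v hv => by dsimp only; rw [hv])
    have hptwise : ∀ v, e lam v * Φ' v =
        (e lam v * (f1 v : ℂ) - e lam v * (f2 v : ℂ)) +
        Complex.I * (e lam v * (f3 v : ℂ) - e lam v * (f4 v : ℂ)) := by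
      intro v
      have hre' : (f1 v : ℝ) - f2 v = (Φ' v).re := by
        rw [hf1, hf2]; simp [max_def]; split_ifs <;> linarith
      have him' : (f3 v : ℝ) - f4 v = (Φ' v).im := by
        rw [hf3, hf4]; simp [max_def]; split_ifs <;> linarith
      have hΦv : Φ' v = ((f1 v - f2 v : ℝ) : ℂ) + Complex.I * ((f3 v - f4 v : ℝ) : ℂ) := by
        rw [hre', him']
        rw [mul_comm]
        exact (Complex.re_add_im (Φ' v)).symm
      rw [hΦv]
      push_cast
      ring
    rw [step0, integral_congr_ae (Filter.Eventually.of_forall hptwise)]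
    rw [integral_add, integral_sub (hint lam f1 h1i) (hint lam f2 h2i),
      integral_const_mul, integral_sub (hint lam f3 h3i) (hint lam f4 h4i)]
    · exact (hint lam f1 h1i).sub (hint lam f2 h2i)
    · exact (((hint lam f3 h3i).sub (hint lam f4 h4i)).const_mul Complex.I)
  rw [show (fun lam : ℝ => ∫ v, e lam v * Φ v ∂σ) = fun lam =>
      ((∫ v, e lam v * (f1 v : ℂ) ∂σ) - ∫ v, e lam v * (f2 v : ℂ) ∂σ) +
      Complex.I * ((∫ v, e lam v * (f3 v : ℂ) ∂σ) - ∫ v, e lam v * (f4 v : ℂ) ∂σ)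
    from funext hdecomp]
  have := (T1.sub T2).add ((T3.sub T4).const_mul Complex.I)
  simpa only [sub_zero, mul_zero, add_zero, sub_self] using this

/-- Let `n ≥ 2` and fix `x ∈ ℝⁿ`, `x ≠ 0`.  For every `Φ ∈ L²(S^{n-1}; ℂ)`, the oscillatory
integral `∫_{S^{n-1}} e^{−iλ x·v} Φ(v) dσ(v)` tends to `0` as `λ → +∞` and as `λ → −∞`;
i.e. `v ↦ e^{−iλ x·v}` converges weakly to `0` in `L²(S^{n-1})`. -/
theorem stmt_4 {n : ℕ} (hn : 2 ≤ n) (x : EuclideanSpace ℝ (Fin n)) (hx : x ≠ 0)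
    (Φ : sphere (0 : EuclideanSpace ℝ (Fin n)) 1 → ℂ)
    (hΦ : MemLp Φ 2 (sphereMeasure n)) :
    Tendsto (fun lam : ℝ => ∫ v, Complex.exp (-(Complex.I * (lam : ℂ) *
        ((⟪x, (v : EuclideanSpace ℝ (Fin n))⟫ : ℝ) : ℂ))) * Φ v ∂(sphereMeasure n))
      atTop (nhds 0) ∧
    Tendsto (fun lam : ℝ => ∫ v, Complex.exp (-(Complex.I * (lam : ℂ) *
        ((⟪x, (v : EuclideanSpace ℝ (Fin n))⟫ : ℝ) : ℂ))) * Φ v ∂(sphereMeasure n))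
      atBot (nhds 0) := by
  refine ⟨key_top hn x hx Φ hΦ, ?_⟩
  have hx' : (-x : EuclideanSpace ℝ (Fin n)) ≠ 0 := neg_ne_zero.2 hx
  have htop := key_top hn (-x) hx' Φ hΦ
  have hneg : Tendsto (fun lam : ℝ => -lam) atBot atTop := tendsto_neg_atBot_atTop
  have hcomp := htop.comp hneg
  simp only [Function.comp_def] at hcomp
  convert hcomp using 2 with lam
  refine integral_congr_ae (Filter.Eventually.of_forall fun v => ?_)
  dsimp only
  congr 2
  rw [inner_neg_left]
  push_cast
  ring
end

section
/- Let M be a bounded open convex subset of ℝ^n (n ≥ 2), T > 0, σ : cl(M) × S^{n-1} → ℝ continuous and bounded, and let S ∈ L^∞(ℝ × M) vanish for t outside (0,T). Define F̃(t,x,v) := ∫_0^{τ(x,v)} exp(−∫_0^s σ(x+rv, v) dr) · S(t−s, x+sv) ds for (t,x,v) ∈ ℝ × cl(M) × S^{n-1}. Then: (i) F̃(t,x,v) = 0 whenever t ≤ 0; (ii) for every t' > τ(x,v), F̃(T+t', x, v) = 0; and (iii) for every 0 < t' ≤ τ(x,v), F̃(T+t', x, v) = exp(−∫_0^{t'} σ(x+uv,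 v) du) · F̃(T, x+t'v, v). -/
open MeasureTheory Metric

/-- The attenuated light ray transform of the source `S` along forward chords:
`F̃(t,x,v) := ∫_0^{τ(x,v)} exp(−∫_0^s σ(x+rv, v) dr) · S(t−s, x+sv) ds`. -/
noncomputable def Ftil {n : ℕ} (M : Set (EuclideanSpace ℝ (Fin n)))
    (σ : EuclideanSpace ℝ (Fin n) → EuclideanSpace ℝ (Fin n) → ℝ)
    (S : ℝ → EuclideanSpace ℝ (Fin n) → ℂ)
    (t : ℝ) (x v : EuclideanSpace ℝ (Fin n)) : ℂ :=
  ∫ s in (0:ℝ)..(exitTime M x v),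
    (Real.exp (-(∫ r in (0:ℝ)..s, σ (x + r • v) v)) : ℂ) * S (t - s) (x + s • v)

section helpers
variable {n : ℕ} {M : Set (EuclideanSpace ℝ (Fin n))} {x v : EuclideanSpace ℝ (Fin n)}

lemma zero_mem_exitSet :
    (0:ℝ) ∈ {s : ℝ | 0 ≤ s ∧ ∀ s' : ℝ, 0 ≤ s' → s' < s → x + s' • v ∈ M} :=
  ⟨le_refl 0, fun s' h1 h2 => absurd (h1.trans_lt h2) (lt_irrefl 0)⟩

lemma bddAbove_exitSet (hMb : Bornology.IsBounded M) (hv : ‖v‖ = 1) :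
    BddAbove {s : ℝ | 0 ≤ s ∧ ∀ s' : ℝ, 0 ≤ s' → s' < s → x + s' • v ∈ M} := by
  obtain ⟨r, hr⟩ := hMb.subset_closedBall 0
  refine ⟨max 0 (r + ‖x‖), fun s hs => ?_⟩
  by_contra hlt
  push_neg at hlt
  have h0s : 0 < s := (le_max_left 0 (r + ‖x‖)).trans_lt hlt
  have hrs : r + ‖x‖ < s := (le_max_right 0 (r + ‖x‖)).trans_lt hlt
  set m : ℝ := (r + ‖x‖ + s) / 2 with hm
  set s' : ℝ := max 0 m with hs'
  have hs'0 : 0 ≤ s' := le_max_left _ _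
  have hs's : s' < s := max_lt h0s (by rw [hm]; linarith)
  have hmem : x + s' • v ∈ M := hs.2 s' hs'0 hs's
  have hball := hr hmem
  rw [mem_closedBall, dist_eq_norm, sub_zero] at hball
  have hns : ‖s' • v‖ = s' := by
    rw [norm_smul, hv, mul_one, Real.norm_eq_abs, abs_of_nonneg hs'0]
  have : s' ≤ r + ‖x‖ := by
    have h4 : ‖(x + s' • v) - x‖ ≤ ‖x + s' • v‖ + ‖x‖ := norm_sub_le _ _
    simp only [add_sub_cancel_left] at h4
    rw [hns] at h4
    linarith
  have : m ≤ s' := le_max_right _ _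
  have : r + ‖x‖ < m := by rw [hm]; linarith
  linarith

lemma exitTime_nonneg (hMb : Bornology.IsBounded M) (hv : ‖v‖ = 1) :
    0 ≤ exitTime M x v :=
  le_csSup (bddAbove_exitSet hMb hv) zero_mem_exitSet

lemma mem_of_lt_exitTime {s : ℝ} (h0 : 0 ≤ s) (hs : s < exitTime M x v) :
    x + s • v ∈ M := by
  obtain ⟨a, ha, hlt⟩ := exists_lt_of_lt_csSup ⟨0, zero_mem_exitSet⟩ hs
  exact ha.2 s h0 hlt

lemma exitTime_shift (hMb : Bornology.IsBounded M) (hv : ‖v‖ = 1) {t' : ℝ}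
    (h0 : 0 ≤ t') (ht : t' ≤ exitTime M x v) :
    exitTime M (x + t' • v) v = exitTime M x v - t' := by
  have key : ∀ s' : ℝ, x + t' • v + s' • v = x + (t' + s') • v := fun s' => by
    rw [add_smul, add_assoc]
  apply le_antisymm
  · apply csSup_le ⟨0, zero_mem_exitSet⟩
    intro s hs
    have hmem : t' + s ∈ {s : ℝ | 0 ≤ s ∧ ∀ s' : ℝ, 0 ≤ s' → s' < s → x + s' • v ∈ M} := by
      refine ⟨by linarith [hs.1], fun u hu0 hu => ?_⟩
      rcases lt_or_ge u t' with h | h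
      · exact mem_of_lt_exitTime hu0 (h.trans_le ht)
      · have h3 := hs.2 (u - t') (by linarith) (by linarith)
        rw [key, show t' + (u - t') = u by ring] at h3
        exact h3
    have h5 : t' + s ≤ exitTime M x v := le_csSup (bddAbove_exitSet hMb hv) hmem
    linarith
  · have hmem : exitTime M x v - t' ∈
        {s : ℝ | 0 ≤ s ∧ ∀ s' : ℝ, 0 ≤ s' → s' < s → (x + t' • v) + s' • v ∈ M} := by
      refine ⟨by linarith, fun s' h1 h2 => ?_⟩
      rw [key]
      exact mem_of_lt_exitTime (by linarith) (by linarith)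
    exact le_csSup (bddAbove_exitSet hMb hv) hmem

end helpers


lemma myIntegrable {n : ℕ}
    (σ : EuclideanSpace ℝ (Fin n) → EuclideanSpace ℝ (Fin n) → ℝ)
    (hσc : Continuous fun p : EuclideanSpace ℝ (Fin n) × EuclideanSpace ℝ (Fin n) => σ p.1 p.2)
    (C : ℝ) (hσb : ∀ x v, |σ x v| ≤ C)
    (S : ℝ → EuclideanSpace ℝ (Fin n) → ℂ)
    (hSm : Measurable fun p : ℝ × EuclideanSpace ℝ (Fin n) => S p.1 p.2)
    (C₂ : ℝ) (hSb : ∀ t x, ‖S t x‖ ≤ C₂)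
    (x v : EuclideanSpace ℝ (Fin n)) (t a b : ℝ) :
    IntervalIntegrable (fun s =>
      (Real.exp (-(∫ r in (0:ℝ)..s, σ (x + r • v) v)) : ℂ) * S (t - s) (x + s • v))
      volume a b := by
  have hline : Continuous fun r : ℝ => σ (x + r • v) v :=
    hσc.comp ((continuous_const.add (continuous_id.smul continuous_const)).prodMk
      continuous_const)
  have hprim : Continuous fun s : ℝ => ∫ r in (0:ℝ)..s, σ (x + r • v) v :=
    intervalIntegral.continuous_primitive (fun a b => hline.intervalIntegrable a b) 0
  have hmeas : AEStronglyMeasurable (fun s =>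
      (Real.exp (-(∫ r in (0:ℝ)..s, σ (x + r • v) v)) : ℂ) * S (t - s) (x + s • v))
      (volume.restrict (Set.uIoc a b)) := by
    apply AEStronglyMeasurable.mul
    · exact (Complex.continuous_ofReal.comp
        (Real.continuous_exp.comp hprim.neg)).aestronglyMeasurable
    · exact (hSm.comp ((continuous_const.sub continuous_id).prodMk
        (continuous_const.add (continuous_id.smul continuous_const))).measurable).aestronglyMeasurable
  rw [intervalIntegrable_iff]
  refine Integrable.mono' (g := fun _ => Real.exp (max C 0 * (|a| + |b|)) * max C₂ 0)
    ?_ hmeas ?_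
  · refine (integrableOn_const_iff).2 (Or.inr ?_)
    exact measure_Ioc_lt_top
  · refine ae_restrict_of_forall_mem measurableSet_uIoc fun s hs => ?_
    have hsb : |s| ≤ |a| + |b| := by
      rcases hs with ⟨h1, h2⟩
      rw [abs_le]
      constructor
      · rcases le_or_gt a b with h | h
        · rw [min_eq_left h] at h1; have := neg_abs_le a; have := abs_nonneg b; linarith
        · rw [min_eq_right h.le] at h1; have := neg_abs_le b; have := abs_nonneg a; linarith
      · rcases le_or_gt a b with h | h
        · rw [max_eq_right h] at h2; have := le_abs_self b; have := abs_nonneg a; linarith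
        · rw [max_eq_left h.le] at h2; have := le_abs_self a; have := abs_nonneg b; linarith
    have hI : |∫ r in (0:ℝ)..s, σ (x + r • v) v| ≤ max C 0 * |s| := by
      have := intervalIntegral.norm_integral_le_of_norm_le_const (C := max C 0)
        (f := fun r => σ (x + r • v) v) (a := 0) (b := s)
        (fun r _ => (Real.norm_eq_abs _ ▸ (hσb _ _).trans (le_max_left _ _)))
      simpa using this
    have h1 : Real.exp (-(∫ r in (0:ℝ)..s, σ (x + r • v) v))
        ≤ Real.exp (max C 0 * (|a| + |b|)) := by
      apply Real.exp_le_exp.2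
      have h2 : -(∫ r in (0:ℝ)..s, σ (x + r • v) v)
          ≤ |∫ r in (0:ℝ)..s, σ (x + r • v) v| := neg_le_abs _
      have h3 : max C 0 * |s| ≤ max C 0 * (|a| + |b|) :=
        mul_le_mul_of_nonneg_left hsb (le_max_right C 0)
      linarith
    rw [norm_mul, Complex.norm_real, Real.norm_eq_abs, abs_of_pos (Real.exp_pos _)]
    exact mul_le_mul h1 ((hSb _ _).trans (le_max_left _ _)) (norm_nonneg _) (Real.exp_pos _).le


/-- For `M ⊆ ℝⁿ` bounded open convex (`n ≥ 2`), `T > 0`, `σ` continuous and bounded, and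
`S ∈ L^∞(ℝ × M)` vanishing for `t ∉ (0,T)`:
(i) `F̃(t,x,v) = 0` whenever `t ≤ 0`;
(ii) for every `t' > τ(x,v)`, `F̃(T+t',x,v) = 0`;
(iii) for every `0 < t' ≤ τ(x,v)`,
`F̃(T+t',x,v) = exp(−∫_0^{t'} σ(x+uv, v) du) · F̃(T, x+t'v, v)`. -/
theorem stmt_16 {n : ℕ} (hn : 2 ≤ n) (M : Set (EuclideanSpace ℝ (Fin n)))
    (hMb : Bornology.IsBounded M) (hMo : IsOpen M) (hMc : Convex ℝ M)
    (T : ℝ) (hT : 0 < T)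
    (σ : EuclideanSpace ℝ (Fin n) → EuclideanSpace ℝ (Fin n) → ℝ)
    (hσc : Continuous fun p : EuclideanSpace ℝ (Fin n) × EuclideanSpace ℝ (Fin n) => σ p.1 p.2)
    (hσb : ∃ C : ℝ, ∀ x v, |σ x v| ≤ C)
    (S : ℝ → EuclideanSpace ℝ (Fin n) → ℂ)
    (hSm : Measurable fun p : ℝ × EuclideanSpace ℝ (Fin n) => S p.1 p.2)
    (hSb : ∃ C : ℝ, ∀ t x, ‖S t x‖ ≤ C)
    (hSsupp : ∀ t : ℝ, t ∉ Set.Ioo 0 T → ∀ x, S t x = 0)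
    (x : EuclideanSpace ℝ (Fin n)) (hx : x ∈ closure M)
    (v : EuclideanSpace ℝ (Fin n)) (hv : ‖v‖ = 1) :
    (∀ t : ℝ, t ≤ 0 → Ftil M σ S t x v = 0) ∧
    (∀ t' : ℝ, exitTime M x v < t' → Ftil M σ S (T + t') x v = 0) ∧
    (∀ t' : ℝ, 0 < t' → t' ≤ exitTime M x v →
      Ftil M σ S (T + t') x v
        = (Real.exp (-(∫ u in (0:ℝ)..t', σ (x + u • v) v)) : ℂ) *
            Ftil M σ S T (x + t' • v) v) := by
  have hτ0 : 0 ≤ exitTime M x v := exitTime_nonneg hMb hv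
  refine ⟨?_, ?_, ?_⟩
  · -- (i)
    intro t ht
    unfold Ftil
    rw [intervalIntegral.integral_congr (g := fun _ => (0:ℂ))
      (fun s hs => ?_), intervalIntegral.integral_const, smul_zero]
    rw [Set.uIcc_of_le hτ0] at hs
    have hS0 : S (t - s) (x + s • v) = 0 :=
      hSsupp _ (fun hmem => absurd hmem.1 (by simp only [not_lt]; linarith [hs.1])) _
    simp [hS0]
  · -- (ii)
    intro t' ht'
    unfold Ftil
    rw [intervalIntegral.integral_congr (g := fun _ => (0:ℂ))
      (fun s hs => ?_), intervalIntegral.integral_const, smul_zero]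
    rw [Set.uIcc_of_le hτ0] at hs
    have hS0 : S (T + t' - s) (x + s • v) = 0 :=
      hSsupp _ (fun hmem => absurd hmem.2 (by simp only [not_lt]; linarith [hs.2])) _
    simp [hS0]
  · -- (iii)
    intro t' ht'0 ht'
    obtain ⟨C, hσb⟩ := hσb
    obtain ⟨C₂, hSb⟩ := hSb
    have hτ' : exitTime M (x + t' • v) v = exitTime M x v - t' :=
      exitTime_shift hMb hv ht'0.le ht'
    have hline : Continuous fun r : ℝ => σ (x + r • v) v :=
      hσc.comp ((continuous_const.add (continuous_id.smul continuous_const)).prodMk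
        continuous_const)
    set τ := exitTime M x v with hτdef
    set f : ℝ → ℂ := fun s =>
      (Real.exp (-(∫ r in (0:ℝ)..s, σ (x + r • v) v)) : ℂ) * S (T + t' - s) (x + s • v)
      with hfdef
    have hint : ∀ a b : ℝ, IntervalIntegrable f volume a b := fun a b =>
      myIntegrable σ hσc C hσb S hSm C₂ hSb x v (T + t') a b
    have key : ∀ s' : ℝ, x + t' • v + s' • v = x + (t' + s') • v := fun s' => by
      rw [add_smul, add_assoc]
    have hswap : ∀ u : ℝ, f (u + t') =
        (Real.exp (-(∫ r in (0:ℝ)..t', σ (x + r • v) v)) : ℂ) *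
        ((Real.exp (-(∫ r in (0:ℝ)..u, σ ((x + t' • v) + r • v) v)) : ℂ) *
          S (T - u) ((x + t' • v) + u • v)) := by
      intro u
      have e1 : (∫ r in (0:ℝ)..(u + t'), σ (x + r • v) v)
          = (∫ r in (0:ℝ)..t', σ (x + r • v) v)
            + ∫ r in t'..(u + t'), σ (x + r • v) v :=
        (intervalIntegral.integral_add_adjacent_intervals
          (hline.intervalIntegrable _ _) (hline.intervalIntegrable _ _)).symm
      have e2 : (∫ r in t'..(u + t'), σ (x + r • v) v)
          = ∫ r in (0:ℝ)..u, σ ((x + t' • v) + r • v) v := by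
        have e3 : (∫ r in (0:ℝ)..u, σ ((x + t' • v) + r • v) v)
            = ∫ r in (0:ℝ)..u, σ (x + (r + t') • v) v := by
          apply intervalIntegral.integral_congr
          intro r _
          have e4 : x + (r + t') • v = x + t' • v + r • v := by
            rw [add_comm r t', ← key]
          simp only [e4]
        rw [e3, intervalIntegral.integral_comp_add_right (fun r => σ (x + r • v) v) t',
          zero_add]
      show (Real.exp (-(∫ r in (0:ℝ)..(u + t'), σ (x + r • v) v)) : ℂ)
          * S (T + t' - (u + t')) (x + (u + t') • v) = _
      rw [e1, e2, show T + t' - (u + t') = T - u by ring,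
        show x + (u + t') • v = (x + t' • v) + u • v by rw [key, add_comm u t'],
        neg_add, Real.exp_add, Complex.ofReal_mul, mul_assoc]
    have first0 : (∫ s in (0:ℝ)..t', f s) = 0 := by
      rw [intervalIntegral.integral_congr (g := fun _ => (0:ℂ)) (fun s hs => ?_),
        intervalIntegral.integral_const, smul_zero]
      rw [Set.uIcc_of_le ht'0.le] at hs
      have hS0 : S (T + t' - s) (x + s • v) = 0 :=
        hSsupp _ (fun hmem => absurd hmem.2 (by simp only [not_lt]; linarith [hs.2])) _
      simp [hfdef, hS0]
    have hsplit : (∫ s in (0:ℝ)..τ, f s) = ∫ s in t'..τ, f s := by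
      rw [← intervalIntegral.integral_add_adjacent_intervals (hint 0 t') (hint t' τ),
        first0, zero_add]
    have hcv : (∫ s in t'..τ, f s) = ∫ u in (0:ℝ)..(τ - t'), f (u + t') := by
      rw [intervalIntegral.integral_comp_add_right f t', zero_add, sub_add_cancel]
    show (∫ s in (0:ℝ)..τ, f s) = _
    rw [hsplit, hcv]
    simp only [hswap]
    rw [intervalIntegral.integral_const_mul]
    unfold Ftil
    rw [hτ']
end
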